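/- For every integer a and every positive integer k, the rational number a^{2k} * (a^{2k} - 1) * B_{2k} / (2k) is an integer, where B_{2k} denotes the 2k-th Bernoulli number. -/

import Mathlib

open PowerSeries Finset Nat


lemma L1 {A : Type*} [CommRing A] (x : A) (a : ℕ) :
    (∑ r ∈ range a, (r : A) * x ^ r) * (x - 1) ^ 2
      = (a : A) * x ^ a * (x - 1) - (x ^ a - 1) * x := by
  induction a with
  | zero => simp
  | succ a ih =>
    rw [sum_range_succ, add_mul, ih]
    push_cast
    ring

lemma L2 (a : ℕ) :
    (rescale (a : ℚ) (bernoulli'PowerSeries ℚ) - bernoulli'PowerSeries ℚ)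
        * (∑ r ∈ range a, exp ℚ ^ r)
      = X * ∑ r ∈ range a, (r : ℚ⟦X⟧) * exp ℚ ^ r := by
  have hexp : exp ℚ - 1 ≠ 0 := by
    simp only [exp, PowerSeries.ext_iff, Ne, not_forall]
    use 1
    simp [factorial_ne_zero]
  have h2 : (exp ℚ - 1) ^ 2 ≠ 0 := pow_ne_zero 2 hexp
  apply mul_right_cancel₀ h2
  have hg : (∑ r ∈ range a, exp ℚ ^ r) * (exp ℚ - 1) = exp ℚ ^ a - 1 := geom_sum_mul _ _
  have hres : rescale (a : ℚ) (bernoulli'PowerSeries ℚ) * (exp ℚ ^ a - 1)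
      = (C (a : ℚ) * X) * exp ℚ ^ a := by
    have h3 : exp ℚ ^ a - 1 = rescale (a : ℚ) (exp ℚ - 1) := by
      rw [map_sub, map_one, exp_pow_eq_rescale_exp]
    rw [h3, ← map_mul, bernoulli'PowerSeries_mul_exp_sub_one, map_mul, rescale_X,
      exp_pow_eq_rescale_exp]
  calc (rescale (a : ℚ) (bernoulli'PowerSeries ℚ) - bernoulli'PowerSeries ℚ)
        * (∑ r ∈ range a, exp ℚ ^ r) * (exp ℚ - 1) ^ 2
      = rescale (a : ℚ) (bernoulli'PowerSeries ℚ) * (exp ℚ ^ a - 1) * (exp ℚ - 1)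
          - bernoulli'PowerSeries ℚ * (exp ℚ - 1) * (exp ℚ ^ a - 1) := by
        rw [← hg]; ring
    _ = (C (a : ℚ) * X) * exp ℚ ^ a * (exp ℚ - 1) - (X * exp ℚ) * (exp ℚ ^ a - 1) := by
        rw [hres, bernoulli'PowerSeries_mul_exp_sub_one]
    _ = X * (((a : ℕ) : ℚ⟦X⟧) * exp ℚ ^ a * (exp ℚ - 1) - (exp ℚ ^ a - 1) * exp ℚ) := by
        rw [map_natCast]; ring
    _ = X * ((∑ r ∈ range a, (r : ℚ⟦X⟧) * exp ℚ ^ r) * (exp ℚ - 1) ^ 2) := by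
        rw [L1]
    _ = X * (∑ r ∈ range a, (r : ℚ⟦X⟧) * exp ℚ ^ r) * (exp ℚ - 1) ^ 2 := by ring


lemma coeff_exp_pow (r n : ℕ) : coeff n (exp ℚ ^ r) = (r : ℚ) ^ n / n ! := by
  rw [exp_pow_eq_rescale_exp, coeff_rescale, coeff_exp]
  simp [div_eq_mul_inv]

lemma L3 (a n : ℕ) (hn : n ≠ 0) :
    ∑ i ∈ range (n+1), (n.choose i : ℚ) * ((a:ℚ)^i - 1) * bernoulli' i
        * (∑ r ∈ range a, (r:ℚ)^(n-i))
      = n * ∑ r ∈ range a, (r:ℚ)^n := by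
  obtain ⟨m, rfl⟩ := Nat.exists_eq_succ_of_ne_zero hn
  have H := congrArg (coeff (m+1)) (L2 a)
  rw [coeff_succ_X_mul, coeff_mul] at H
  rw [Finset.Nat.sum_antidiagonal_eq_sum_range_succ_mk] at H
  have hL : ∀ i ∈ range (m+1+1),
      coeff i (rescale (a : ℚ) (bernoulli'PowerSeries ℚ) - bernoulli'PowerSeries ℚ)
        * coeff (m+1-i) (∑ r ∈ range a, exp ℚ ^ r)
      = ((a:ℚ)^i - 1) * bernoulli' i / i ! * ((∑ r ∈ range a, (r:ℚ)^(m+1-i)) / (m+1-i)!) := by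
    intro i _
    rw [map_sub, coeff_rescale]
    simp only [map_sum, coeff_exp_pow, bernoulli'PowerSeries, coeff_mk]
    rw [← Finset.sum_div]
    simp only [Algebra.algebraMap_self, RingHom.id_apply]
    ring
  rw [Finset.sum_congr rfl hL] at H
  have hR : coeff m (∑ r ∈ range a, (r : ℚ⟦X⟧) * exp ℚ ^ r)
      = (∑ r ∈ range a, (r:ℚ)^(m+1)) / m ! := by
    have hr : ∀ r ∈ range a, coeff m ((r : ℚ⟦X⟧) * exp ℚ ^ r) = (r:ℚ)^(m+1) / m ! := by
      intro r _
      rw [show ((r:ℕ) : ℚ⟦X⟧) = C (r:ℚ) by rw [map_natCast], coeff_C_mul, coeff_exp_pow,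
        pow_succ]
      ring
    rw [map_sum, Finset.sum_congr rfl hr, ← Finset.sum_div]
  rw [hR] at H
  -- now multiply H by (m+1)!
  have hfac : ∀ j : ℕ, (j ! : ℚ) ≠ 0 := fun j => Nat.cast_ne_zero.mpr (factorial_ne_zero j)
  calc ∑ i ∈ range (m+1+1), ((m+1).choose i : ℚ) * ((a:ℚ)^i - 1) * bernoulli' i
        * (∑ r ∈ range a, (r:ℚ)^(m+1-i))
      = ∑ i ∈ range (m+1+1), ((m+1)! : ℚ) *
          (((a:ℚ)^i - 1) * bernoulli' i / i ! * ((∑ r ∈ range a, (r:ℚ)^(m+1-i)) / (m+1-i)!)) := by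
        refine Finset.sum_congr rfl fun i hi => ?_
        rw [mem_range] at hi
        rw [Nat.cast_choose ℚ (Nat.lt_succ_iff.mp hi)]
        field_simp
    _ = ((m+1)! : ℚ) * ((∑ r ∈ range a, (r:ℚ)^(m+1)) / m !) := by rw [← Finset.mul_sum, H]
    _ = (m+1 : ℕ) * ∑ r ∈ range a, (r:ℚ)^(m+1) := by
        rw [factorial_succ]
        push_cast
        field_simp


lemma sum_int {s : Finset ℕ} {f : ℕ → ℚ} (h : ∀ i ∈ s, ∃ z : ℤ, f i = z) :
    ∃ z : ℤ, ∑ i ∈ s, f i = z := by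
  classical
  induction s using Finset.induction_on with
  | empty => exact ⟨0, by simp⟩
  | insert _ _ hni ih =>
    obtain ⟨z1, hz1⟩ := h _ (Finset.mem_insert_self _ _)
    obtain ⟨z2, hz2⟩ := ih fun i hi => h i (Finset.mem_insert_of_mem hi)
    exact ⟨z1 + z2, by rw [Finset.sum_insert hni, hz1, hz2]; push_cast; ring⟩

lemma L4 (a : ℕ) : ∀ n : ℕ, n ≠ 0 →
    ∃ z : ℤ, (a:ℚ)^n * ((a:ℚ)^n - 1) * bernoulli' n / n = z := by
  intro n
  induction n using Nat.strong_induction_on with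
  | _ n ih =>
  intro hn
  obtain ⟨m, rfl⟩ := Nat.exists_eq_succ_of_ne_zero hn
  have key := L3 a (m+1) (succ_ne_zero m)
  rw [sum_range_succ] at key
  simp only [choose_self, Nat.cast_one, one_mul, Nat.sub_self, pow_zero, sum_const,
    card_range, nsmul_eq_mul, mul_one] at key
  have hsum : (∑ i ∈ range (m+1), ((m+1).choose i : ℚ) * ((a:ℚ)^i - 1) * bernoulli' i
        * (∑ r ∈ range a, (r:ℚ)^(m+1-i)))
      = (m+1 : ℚ) * (∑ r ∈ range a, (r:ℚ)^(m+1))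
        - ((a:ℚ)^(m+1) - 1) * bernoulli' (m+1) * a := by
    push_cast at key ⊢
    linarith [key]
  have h1 : ((m:ℚ)+1) ≠ 0 := by positivity
  have hz : ∀ i ∈ range (m+1), ∃ z : ℤ,
      (a:ℚ)^m * (((m+1).choose i : ℚ) * ((a:ℚ)^i - 1) * bernoulli' i
        * (∑ r ∈ range a, (r:ℚ)^(m+1-i))) / (m+1 : ℚ) = z := by
    intro i hi
    rw [mem_range] at hi
    match i, hi with
    | 0, _ => exact ⟨0, by simp⟩
    | (j+1), hi =>
      obtain ⟨z, hzz⟩ := ih (j+1) hi (succ_ne_zero j)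
      push_cast at hzz
      refine ⟨(m.choose j : ℤ) * (a:ℤ)^(m - (j+1)) * (∑ r ∈ range a, (r:ℤ)^(m - j)) * z, ?_⟩
      have h2 : ((j:ℚ)+1) ≠ 0 := by positivity
      have hchoose : ((m+1).choose (j+1) : ℚ) * ((j:ℚ)+1) = ((m:ℚ)+1) * (m.choose j : ℚ) := by
        exact_mod_cast (Nat.add_one_mul_choose_eq m j).symm
      have e1 : ((m+1).choose (j+1) : ℚ) / ((m:ℚ)+1) = (m.choose j : ℚ) / ((j:ℚ)+1) := by
        rw [div_eq_div_iff h1 h2]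
        linear_combination hchoose
      have hpow : (a:ℚ)^m = (a:ℚ)^(m - (j+1)) * (a:ℚ)^(j+1) := by
        rw [← pow_add]
        congr 1
        omega
      push_cast
      rw [hpow]
      linear_combination ((m.choose j : ℚ) * (a:ℚ)^(m-(j+1))
          * (∑ r ∈ range a, (r:ℚ)^(m-j))) * hzz
        + ((a:ℚ)^(m-(j+1)) * (a:ℚ)^(j+1) * ((a:ℚ)^(j+1) - 1) * bernoulli' (j+1)
          * (∑ r ∈ range a, (r:ℚ)^(m-j))) * e1
  obtain ⟨Z, hZ⟩ := sum_int hz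
  have hfin : (∑ i ∈ range (m+1), (a:ℚ)^m * (((m+1).choose i : ℚ) * ((a:ℚ)^i - 1)
      * bernoulli' i * (∑ r ∈ range a, (r:ℚ)^(m+1-i))) / (m+1 : ℚ))
      = (a:ℚ)^m * ((m+1 : ℚ) * (∑ r ∈ range a, (r:ℚ)^(m+1))
        - ((a:ℚ)^(m+1) - 1) * bernoulli' (m+1) * a) / (m+1 : ℚ) := by
    rw [← hsum, Finset.mul_sum, Finset.sum_div]
  refine ⟨(a:ℤ)^m * (∑ r ∈ range a, (r:ℤ)^(m+1)) - Z, ?_⟩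
  push_cast
  rw [← hZ, hfin]
  field_simp
  simp only [Nat.succ_eq_add_one]
  ring

theorem stmt_4 (a : ℤ) (k : ℕ) (hk : 0 < k) :
    ∃ n : ℤ, (a : ℚ) ^ (2 * k) * ((a : ℚ) ^ (2 * k) - 1) * bernoulli (2 * k) / (2 * k)
      = (n : ℚ) := by
  obtain ⟨z, hz⟩ := L4 a.natAbs (2 * k) (by omega)
  refine ⟨z, ?_⟩
  have habs : ((a.natAbs : ℚ)) ^ (2 * k) = (a : ℚ) ^ (2 * k) := by
    rw [Nat.cast_natAbs, pow_mul, pow_mul, Int.cast_abs, sq_abs]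
  have hb : bernoulli (2 * k) = bernoulli' (2 * k) :=
    bernoulli_eq_bernoulli'_of_ne_one (by omega)
  rw [hb, show ((2 : ℚ) * k) = ((2 * k : ℕ) : ℚ) by push_cast; ring, ← habs]
  exact hz
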